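/- Let A : (0,∞) → (0,∞) be continuous with A(x) → 0 as x → ∞, and suppose A is convex and differentiable on some interval (x₀, ∞). Let (a_t) satisfy a_{t+1} = a_t + A(a_t) with a_t → ∞, and let f : (0,∞) → (0,∞) satisfy f'(t) = A(f(t)) for all sufficiently large t with f(t) → ∞. Then f(t)/a_t → 1 as t → ∞. -/

import Mathlib

open Filter Set

set_option maxHeartbeats 2000000 in
theorem stmt_5 (A : ℝ → ℝ) (hApos : ∀ x, 0 < x → 0 < A x)
    (hAcont : ContinuousOn A (Ioi 0))
    (hA0 : Tendsto A atTop (nhds 0))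
    (x₀ : ℝ) (hAconv : ConvexOn ℝ (Ioi x₀) A) (hAdiff : DifferentiableOn ℝ A (Ioi x₀))
    (a : ℕ → ℝ) (hapos : ∀ t, 0 < a t)
    (harec : ∀ t, a (t + 1) = a t + A (a t))
    (hatop : Tendsto a atTop atTop)
    (f : ℝ → ℝ) (hfpos : ∀ t, 0 < t → 0 < f t)
    (hode : ∃ t₁, ∀ t ≥ t₁, HasDerivAt f (A (f t)) t)
    (hftop : Tendsto f atTop atTop) :
    Tendsto (fun t : ℕ => f t / a t) atTop (nhds 1) := by
  obtain ⟨t₁, hode⟩ := hode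
  rw [Metric.tendsto_atTop]
  intro δ hδ
  -- choose a small ε
  set ε : ℝ := min (δ / 8) (1 / 2) with hε_def
  have hε0 : 0 < ε := lt_min (by linarith) (by norm_num)
  have hε2 : ε ≤ 1 / 2 := min_le_right _ _
  have hεδ : ε ≤ δ / 8 := min_le_left _ _
  -- differentiability of A at points of Ioi x₀
  have hAdiff' : ∀ x, x₀ < x → DifferentiableAt ℝ A x := fun x hx =>
    (hAdiff x hx).differentiableAt (Ioi_mem_nhds hx)
  -- slope inequalities from convexity
  have hslope1 : ∀ x y : ℝ, x₀ < x → x < y → deriv A x ≤ (A y - A x) / (y - x) := by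
    intro x y hx hxy
    have := hAconv.deriv_le_slope (mem_Ioi.mpr hx) (mem_Ioi.mpr (hx.trans hxy)) hxy
      (hAdiff' x hx)
    rwa [slope_def_field] at this
  have hslope2 : ∀ x y : ℝ, x₀ < x → x < y → (A y - A x) / (y - x) ≤ deriv A y := by
    intro x y hx hxy
    have := hAconv.slope_le_deriv (mem_Ioi.mpr hx) (mem_Ioi.mpr (hx.trans hxy)) hxy
      (hAdiff' y (hx.trans hxy))
    rwa [slope_def_field] at this
  -- monotonicity of deriv A on Ioi x₀
  have hdmono : MonotoneOn (deriv A) (Ioi x₀) :=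
    hAconv.monotoneOn_deriv fun x hx => hAdiff' x (mem_Ioi.mp hx)
  -- deriv A ≤ 0 on Ioi x₀
  have hd0 : ∀ x, x₀ < x → deriv A x ≤ 0 := by
    intro x hx
    by_contra hc
    push_neg at hc
    obtain ⟨M, hM⟩ := (Filter.eventually_atTop.mp (hA0.eventually_lt_const one_pos))
    set y : ℝ := max M (x + (1 + |A x|) / deriv A x + 1) with hy_def
    have hxy : x < y := by
      have h1 : 0 < (1 + |A x|) / deriv A x :=
        div_pos (by positivity) hc
      have : x + (1 + |A x|) / deriv A x + 1 ≤ y := le_max_right _ _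
      linarith
    have hAy : A y < 1 := hM y (le_max_left _ _)
    have hsl := hslope1 x y hx hxy
    have h1 : deriv A x * (y - x) ≤ A y - A x :=
      (le_div_iff₀ (by linarith)).mp hsl
    have h2 : (1 + |A x|) / deriv A x ≤ y - x := by
      have : x + (1 + |A x|) / deriv A x + 1 ≤ y := le_max_right _ _
      linarith
    have h3 : 1 + |A x| ≤ (y - x) * deriv A x := (div_le_iff₀ hc).mp h2
    have h4 : -|A x| ≤ A x := neg_abs_le _
    nlinarith
  -- find x₁ with deriv A ≥ -ε beyond x₁
  have hx₁ex : ∃ x₁, x₀ < x₁ ∧ 0 < x₁ ∧ ∀ x, x₁ ≤ x → -ε ≤ deriv A x := by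
    have hz : ∃ z, x₀ < z ∧ 0 < z ∧ -ε < deriv A z := by
      by_contra hP
      push_neg at hP
      set x : ℝ := max x₀ 0 + 1 with hx_def
      have hx1 : x₀ < x := by
        have := le_max_left x₀ (0 : ℝ); linarith
      have hx2 : (0 : ℝ) < x := by
        have := le_max_right x₀ (0 : ℝ); linarith
      have hAx : 0 < A x := hApos x hx2
      set y : ℝ := x + A x / ε + 1 with hy_def
      have hxy : x < y := by
        have : 0 < A x / ε := div_pos hAx hε0
        simp only [hy_def]; linarith
      have hy0 : 0 < y := hx2.trans hxy
      have hAy : 0 < A y := hApos y hy0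
      have hdy : deriv A y ≤ -ε := hP y (hx1.trans hxy) hy0
      have hsl := hslope2 x y hx1 hxy
      have h1 : A y - A x ≤ -ε * (y - x) := by
        have := hsl.trans hdy
        exact (div_le_iff₀ (by linarith)).mp this
      have h2 : ε * (A x / ε + 1) = A x + ε := by field_simp
      have h3 : y - x = A x / ε + 1 := by simp only [hy_def]; ring
      rw [h3] at h1
      nlinarith
    obtain ⟨z, hz1, hz2, hz3⟩ := hz
    exact ⟨z, hz1, hz2, fun x hx =>
      le_of_lt (lt_of_lt_of_le hz3 (hdmono (mem_Ioi.mpr hz1)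
        (mem_Ioi.mpr (lt_of_lt_of_le hz1 hx)) hx))⟩
  obtain ⟨x₁, hx₁x₀, hx₁0, hx₁ε⟩ := hx₁ex
  -- the two key estimates on A
  have E1 : ∀ x y : ℝ, x₁ ≤ x → x ≤ y → A y ≤ A x := by
    intro x y hx hxy
    rcases eq_or_lt_of_le hxy with rfl | hlt
    · exact le_rfl
    · have hx0 : x₀ < x := hx₁x₀.trans_le hx
      have hsl := hslope2 x y hx0 hlt
      have hdy : deriv A y ≤ 0 := hd0 y (hx0.trans hlt)
      have h1 : A y - A x ≤ 0 * (y - x) := (div_le_iff₀ (by linarith)).mp (hsl.trans hdy)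
      linarith
  have E2 : ∀ x y : ℝ, x₁ ≤ x → x ≤ y → A x - ε * (y - x) ≤ A y := by
    intro x y hx hxy
    rcases eq_or_lt_of_le hxy with rfl | hlt
    · simp
    · have hx0 : x₀ < x := hx₁x₀.trans_le hx
      have hsl := hslope1 x y hx0 hlt
      have hdx : -ε ≤ deriv A x := hx₁ε x hx
      have h1 : -ε * (y - x) ≤ A y - A x := (le_div_iff₀ (by linarith)).mp (hdx.trans hsl)
      linarith
  -- monotonicity of f
  set t₂ : ℝ := max t₁ 1 with ht₂_def
  have hfC : ContinuousOn f (Ici t₂) := fun x hx =>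
    (hode x (le_trans (le_max_left _ _) hx)).differentiableAt.continuousAt.continuousWithinAt
  have hfM : MonotoneOn f (Ici t₂) := by
    have : StrictMonoOn f (Ici t₂) := by
      apply strictMonoOn_of_hasDerivWithinAt_pos (convex_Ici t₂) hfC
        (f' := fun x => A (f x))
      · intro x hx
        rw [interior_Ici] at hx
        exact (hode x (le_of_lt (lt_of_le_of_lt (le_max_left _ _) hx))).hasDerivWithinAt
      · intro x hx
        rw [interior_Ici] at hx
        have hx1 : (1 : ℝ) < x := lt_of_le_of_lt (le_max_right _ _) hx
        exact hApos _ (hfpos x (by linarith))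
    exact this.monotoneOn
  -- choose N
  have h1 : ∀ᶠ n : ℕ in atTop, x₁ ≤ a n := hatop.eventually (eventually_ge_atTop _)
  have hfnat : Tendsto (fun n : ℕ => f n) atTop atTop :=
    hftop.comp tendsto_natCast_atTop_atTop
  have h2 : ∀ᶠ n : ℕ in atTop, x₁ ≤ f n := hfnat.eventually (eventually_ge_atTop _)
  have h3 : ∀ᶠ n : ℕ in atTop, t₂ ≤ (n : ℝ) :=
    tendsto_natCast_atTop_atTop.eventually (eventually_ge_atTop _)
  obtain ⟨N, hN⟩ := Filter.eventually_atTop.mp ((h1.and h2).and h3)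
  have hNa : ∀ n, N ≤ n → x₁ ≤ a n := fun n hn => ((hN n hn).1).1
  have hNf : ∀ n, N ≤ n → x₁ ≤ f n := fun n hn => ((hN n hn).1).2
  have hNt : ∀ n, N ≤ n → t₂ ≤ (n : ℝ) := fun n hn => (hN n hn).2
  -- key increment estimates for f
  have K : ∀ n : ℕ, N ≤ n →
      (1 - ε) * A (f n) ≤ f ((n : ℝ) + 1) - f n ∧ f ((n : ℝ) + 1) - f n ≤ A (f n) := by
    intro n hn
    have hb : t₂ ≤ (n : ℝ) := hNt n hn
    have hbt₁ : t₁ ≤ (n : ℝ) := le_trans (le_max_left _ _) hb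
    have hcont : ContinuousOn f (Icc (n : ℝ) ((n : ℝ) + 1)) := fun x hx =>
      (hode x (le_trans hbt₁ hx.1)).differentiableAt.continuousAt.continuousWithinAt
    have hder : ∀ x ∈ Ioo (n : ℝ) ((n : ℝ) + 1), HasDerivAt f (A (f x)) x := fun x hx =>
      hode x (le_trans hbt₁ (le_of_lt hx.1))
    obtain ⟨c, hc, hceq⟩ := exists_hasDerivAt_eq_slope f (fun x => A (f x))
      (by linarith : (n : ℝ) < (n : ℝ) + 1) hcont hder
    have hceq' : A (f c) = f ((n : ℝ) + 1) - f n := by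
      rw [hceq]; ring_nf
    have hcn : (n : ℝ) ≤ c := le_of_lt hc.1
    have hcn1 : c ≤ (n : ℝ) + 1 := le_of_lt hc.2
    have hfc1 : f n ≤ f c := hfM (mem_Ici.mpr hb) (mem_Ici.mpr (hb.trans hcn)) hcn
    have hfc2 : f c ≤ f ((n : ℝ) + 1) :=
      hfM (mem_Ici.mpr (hb.trans hcn)) (mem_Ici.mpr (by linarith)) hcn1
    have hfn : x₁ ≤ f n := hNf n hn
    have hupper : f ((n : ℝ) + 1) - f n ≤ A (f n) := by
      rw [← hceq']; exact E1 (f n) (f c) hfn hfc1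
    refine ⟨?_, hupper⟩
    have hlow1 : A (f ((n : ℝ) + 1)) ≤ f ((n : ℝ) + 1) - f n := by
      rw [← hceq']; exact E1 (f c) (f ((n : ℝ) + 1)) (hfn.trans hfc1) hfc2
    have hlow2 : A (f n) - ε * (f ((n : ℝ) + 1) - f n) ≤ A (f ((n : ℝ) + 1)) :=
      E2 (f n) (f ((n : ℝ) + 1)) hfn (hfc1.trans hfc2)
    nlinarith
  -- f along integers is above f N
  have hfNle : ∀ n : ℕ, N ≤ n → f N ≤ f n := fun n hn =>
    hfM (mem_Ici.mpr (hNt N le_rfl)) (mem_Ici.mpr (hNt n hn)) (Nat.cast_le.mpr hn)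
  -- Lemma I : f n - a n is bounded above
  set C₂ : ℝ := max (f N - a N) 0 with hC₂_def
  have hC₂0 : 0 ≤ C₂ := le_max_right _ _
  have LI : ∀ n : ℕ, N ≤ n → f n - a n ≤ C₂ := by
    intro n hn
    induction n, hn using Nat.le_induction with
    | base => exact le_max_left _ _
    | succ n hn ih =>
      have hK := K n hn
      have hcast : ((n + 1 : ℕ) : ℝ) = (n : ℝ) + 1 := by push_cast; ring
      rw [hcast, harec n]
      have hfn : x₁ ≤ f n := hNf n hn
      have han : x₁ ≤ a n := hNa n hn
      rcases le_total (f n) (a n) with h | h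
      · -- f n ≤ a n
        have hE := E2 (f n) (a n) hfn h
        nlinarith [hK.2]
      · -- a n ≤ f n
        have hE := E1 (a n) (f n) han h
        linarith [hK.2]
  -- Lemma II : a n - f n ≤ C₁ + ε' (f n - f N)
  set ε' : ℝ := ε / (1 - ε) with hε'_def
  have h1ε : (0 : ℝ) < 1 - ε := by linarith
  have hε'0 : 0 ≤ ε' := le_of_lt (div_pos hε0 h1ε)
  have hε'2ε : ε' ≤ 2 * ε := by
    rw [hε'_def, div_le_iff₀ h1ε]; nlinarith
  set C₁ : ℝ := max (a N - f N) 0 with hC₁_def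
  have hC₁0 : 0 ≤ C₁ := le_max_right _ _
  have LII : ∀ n : ℕ, N ≤ n → a n - f n ≤ C₁ + ε' * (f n - f N) := by
    intro n hn
    induction n, hn using Nat.le_induction with
    | base =>
      have h0 : a N - f N ≤ C₁ := le_max_left _ _
      have hz : ε' * (f (N : ℝ) - f (N : ℝ)) = 0 := by ring
      linarith
    | succ n hn ih =>
      have hK := K n hn
      have hcast : ((n + 1 : ℕ) : ℝ) = (n : ℝ) + 1 := by push_cast; ring
      rw [hcast, harec n]
      have hfn : x₁ ≤ f n := hNf n hn
      have han : x₁ ≤ a n := hNa n hn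
      have hfNn : f N ≤ f n := hfNle n hn
      have hid : (1 - ε) * A (f n) = A (f n) - ε * A (f n) := by ring
      have hfNn1 : f n ≤ f ((n : ℝ) + 1) := by
        have hA : 0 < A (f n) := hApos _ (by linarith)
        nlinarith [hK.1]
      have hεkey : ε * A (f n) ≤ ε' * (f ((n : ℝ) + 1) - f n) := by
        have h := mul_le_mul_of_nonneg_left hK.1 hε'0
        have heq : ε' * ((1 - ε) * A (f n)) = ε * A (f n) := by
          rw [hε'_def, ← mul_assoc, div_mul_cancel₀ ε (ne_of_gt h1ε)]
        linarith [heq ▸ h]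
      have hexp : ε' * (f ((n : ℝ) + 1) - f N) =
          ε' * (f ((n : ℝ) + 1) - f n) + ε' * (f n - f N) := by ring
      have hprod : 0 ≤ ε' * (f n - f N) := mul_nonneg hε'0 (by linarith)
      rcases le_total (a n) (f n) with h | h
      · -- a n ≤ f n
        have hE := E2 (a n) (f n) han h
        have h1 : ε * (f n - a n) ≤ 1 * (f n - a n) :=
          mul_le_mul_of_nonneg_right (by linarith) (by linarith)
        linarith [hK.1]
      · -- f n ≤ a n
        have hE := E1 (f n) (a n) hfn h
        linarith [hK.1]
  -- final step
  have hfN0 : 0 ≤ f N := le_trans (le_of_lt hx₁0) (hNf N le_rfl)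
  set R : ℝ := 8 * (C₁ + C₂) / δ + C₂ + 1 with hR_def
  have h4 : ∀ᶠ n : ℕ in atTop, R ≤ a n := hatop.eventually (eventually_ge_atTop _)
  obtain ⟨M₀, hM₀⟩ := Filter.eventually_atTop.mp h4
  refine ⟨max N M₀, fun n hn => ?_⟩
  have hnN : N ≤ n := le_trans (le_max_left _ _) hn
  have hnM : M₀ ≤ n := le_trans (le_max_right _ _) hn
  set x : ℝ := f n with hx_def
  set y : ℝ := a n with hy_def
  have hy0 : 0 < y := hapos n
  have hyR : R ≤ y := hM₀ n hnM
  have h8 : 8 * (C₁ + C₂) ≤ y * δ := by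
    have : 8 * (C₁ + C₂) / δ ≤ y := by
      have := hyR; rw [hR_def] at this; linarith
    exact (div_le_iff₀ hδ).mp this
  have hC₁y : C₁ ≤ δ * y / 8 := by linarith
  have hC₂y : C₂ ≤ δ * y / 8 := by linarith
  have hC₂y1 : C₂ + 1 ≤ y := by
    have h0 : 0 ≤ 8 * (C₁ + C₂) / δ := div_nonneg (by linarith) (le_of_lt hδ)
    rw [hR_def] at hyR; linarith
  have hx0 : 0 ≤ x := le_trans (le_of_lt hx₁0) (hNf n hnN)
  have hxy2 : x ≤ 2 * y := by
    have := LI n hnN; linarith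
  have hyx : y - x ≤ δ * y / 8 + δ * y / 2 := by
    have hII := LII n hnN
    have h1 : ε' * (x - f N) ≤ ε' * x :=
      mul_le_mul_of_nonneg_left (by linarith) hε'0
    have h2 : ε' * x ≤ 2 * ε * x := mul_le_mul_of_nonneg_right hε'2ε hx0
    have h3 : 2 * ε * x ≤ (δ / 4) * x := by nlinarith
    have h4 : (δ / 4) * x ≤ (δ / 4) * (2 * y) :=
      mul_le_mul_of_nonneg_left hxy2 (by linarith)
    linarith
  have hxyup : x - y ≤ δ * y / 8 := by
    have := LI n hnN; linarith
  have hδy : 0 < δ * y := mul_pos hδ hy0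
  rw [Real.dist_eq]
  have heq : x / y - 1 = (x - y) / y := by field_simp
  rw [heq, abs_div, abs_of_pos hy0, div_lt_iff₀ hy0]
  rw [abs_lt]
  constructor <;> nlinarith
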